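/- If P is a complex of projective modules and C is a bounded exact complex of modules, then the Hom-complex Hom(P, C) is exact. -/

import Mathlib

open CategoryTheory CategoryTheory.Limits CochainComplex.HomComplex

variable {A : Type} [Ring A]

/-- Cochain complexes of A-modules. -/
abbrev Cplx (A : Type) [Ring A] := CochainComplex (ModuleCat A) ℤ

/-- A complex is acyclic (exact) if it is exact at every degree. -/
def Acyclic (C : Cplx A) : Prop := ∀ n : ℤ, C.ExactAt n

/-- A module viewed as a complex concentrated in degree 0. -/
noncomputable def sgl (Q : ModuleCat A) : Cplx A :=
  (HomologicalComplex.single (ModuleCat A) (ComplexShape.up ℤ) 0).obj Q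

/-- Acyclicity of the total Hom-complex Hom(P, Q): every n-cocycle is a coboundary. -/
def HomAcyclic (P Q : Cplx A) : Prop :=
  ∀ (n : ℤ) (z : Cocycle P Q n), ∃ y : Cochain P Q (n - 1), δ (n - 1) n y = z.1

/-- A complex is bounded if its terms vanish outside a finite range. -/
def Bdd (C : Cplx A) : Prop := ∃ a b : ℤ, ∀ n : ℤ, (n < a ∨ b < n) → IsZero (C.X n)

/-- A Gorenstein projective module: a kernel Ker(E^1 → E^2) of a totally acyclic
complex of projectives. -/
def IsGorensteinProjective (G : ModuleCat A) : Prop :=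
  ∃ E : Cplx A, (∀ n : ℤ, Projective (E.X n)) ∧ Acyclic E ∧
    (∀ Q : ModuleCat A, Projective Q → HomAcyclic E (sgl Q)) ∧
    Nonempty (G ≅ kernel (E.d 1 2))

/-- If P is a complex of projectives and C is a bounded exact complex,
then Hom(P, C) is exact. -/
lemma exists_lift (C : Cplx A) (m : ℤ) (hm : C.ExactAt m) {Q : ModuleCat A} [Projective Q]
    (u : Q ⟶ C.X m) (hu : u ≫ C.d m (m+1) = 0) :
    ∃ v : Q ⟶ C.X (m-1), v ≫ C.d (m-1) m = u := by
  rw [C.exactAt_iff' (m-1) m (m+1) (by simp) (by simp),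
    ShortComplex.moduleCat_exact_iff] at hm
  dsimp at hm
  set K := LinearMap.ker (C.d m (m+1)).hom with hK
  have hmemd : ∀ x : C.X (m-1), C.d (m-1) m x ∈ K := by
    intro x
    simp only [hK, LinearMap.mem_ker]
    have h := congrArg (fun f => ModuleCat.Hom.hom f x) (C.d_comp_d (m-1) m (m+1))
    simpa only [ModuleCat.hom_comp, LinearMap.comp_apply, ModuleCat.hom_zero, LinearMap.zero_apply] using h
  have hmemu : ∀ x : Q, u x ∈ K := by
    intro x
    simp only [hK, LinearMap.mem_ker]
    have h := congrArg (fun f => ModuleCat.Hom.hom f x) hu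
    simpa only [ModuleCat.hom_comp, LinearMap.comp_apply, ModuleCat.hom_zero, LinearMap.zero_apply] using h
  let π : C.X (m-1) ⟶ ModuleCat.of A K :=
    ModuleCat.ofHom ((C.d (m-1) m).hom.codRestrict K hmemd)
  let u' : Q ⟶ ModuleCat.of A K :=
    ModuleCat.ofHom (u.hom.codRestrict K hmemu)
  have hπ : Epi π := by
    rw [ModuleCat.epi_iff_surjective]
    rintro ⟨x, hx⟩
    obtain ⟨y, hy⟩ := hm x hx
    exact ⟨y, Subtype.ext hy⟩
  refine ⟨Projective.factorThru u' π, ?_⟩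
  have := Projective.factorThru_comp u' π
  ext x
  have h2 := congrArg (fun f => ModuleCat.Hom.hom f x) this
  exact congrArg Subtype.val h2

lemma eqToHom_d (C : Cplx A) {i i' j : ℤ} (h : i = i') :
    eqToHom (congrArg C.X h) ≫ C.d i' j = C.d i j := by subst h; simp

lemma d_eqToHom (C : Cplx A) {i j j' : ℤ} (h : j = j') :
    C.d i j ≫ eqToHom (congrArg C.X h) = C.d i j' := by subst h; simp

lemma v_eqToHom {P C : Cplx A} {n : ℤ} (z : Cochain P C n) (p q q' : ℤ) (hpq : p + n = q)
    (h : q = q') : z.v p q hpq ≫ eqToHom (congrArg C.X h) = z.v p q' (by omega) := by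
  subst h; simp

open Classical in
/-- Recursive construction of the primitive. -/
noncomputable def fAux (P C : Cplx A) (n b : ℤ) (z : Cochain P C n) (p : ℤ) :
    P.X p ⟶ C.X (p + n - 1) :=
  if h : b + 1 - n ≤ p then 0
  else if h2 : ∃ v : P.X p ⟶ C.X (p + n - 1), v ≫ C.d (p + n - 1) (p + n) =
      z.v p (p + n) rfl - n.negOnePow • (P.d p (p + 1) ≫
        (fAux P C n b z (p + 1) ≫ eqToHom (congrArg C.X (by omega : p + 1 + n - 1 = p + n))))
    then h2.choose else 0
  termination_by (b + 1 - n - p).toNat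
  decreasing_by omega

lemma fAux_spec (P C : Cplx A) (hC : ∀ m : ℤ, C.ExactAt m) (b : ℤ)
    (hb : ∀ m : ℤ, b < m → IsZero (C.X m)) (hP : ∀ p : ℤ, Projective (P.X p))
    (n : ℤ) (z : Cochain P C n) (hz : δ n (n + 1) z = 0) (p : ℤ) :
    fAux P C n b z p ≫ C.d (p + n - 1) (p + n) =
      z.v p (p + n) rfl - n.negOnePow • (P.d p (p + 1) ≫
        (fAux P C n b z (p + 1) ≫ eqToHom (congrArg C.X (by omega : p + 1 + n - 1 = p + n)))) := by
  by_cases h : b + 1 - n ≤ p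
  · rw [fAux, dif_pos h, fAux, dif_pos (by omega)]
    have hz0 : z.v p (p + n) rfl = 0 := (hb (p + n) (by omega)).eq_of_tgt _ _
    simp [hz0]
  · -- inductive step
    have IH := fAux_spec P C hC b hb hP n z hz (p + 1)
    -- the cocycle condition at p
    have hcoc := Cochain.congr_v hz p (p + n + 1) (by omega)
    rw [δ_v n (n + 1) rfl z p (p + n + 1) (by omega) (p + n) (p + 1) (by omega) rfl,
      Cochain.zero_v] at hcoc
    have key : (P.d p (p + 1) ≫ (fAux P C n b z (p + 1) ≫
        eqToHom (congrArg C.X (by omega : p + 1 + n - 1 = p + n)))) ≫ C.d (p + n) (p + n + 1) =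
        P.d p (p + 1) ≫ z.v (p + 1) (p + n + 1) (by omega) := by
      rw [Category.assoc, Category.assoc, eqToHom_d C (by omega : p + 1 + n - 1 = p + n)]
      have hd2 : C.d (p + 1 + n - 1) (p + n + 1) = C.d (p + 1 + n - 1) (p + 1 + n) ≫
          eqToHom (congrArg C.X (by omega : p + 1 + n = p + n + 1)) :=
        (d_eqToHom C (by omega : p + 1 + n = p + n + 1)).symm
      rw [hd2, ← Category.assoc (fAux P C n b z (p + 1)), IH, Preadditive.sub_comp,
        v_eqToHom z (p + 1) (p + 1 + n) (p + n + 1) (by omega) (by omega),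
        Linear.units_smul_comp, Category.assoc, Category.assoc, Preadditive.comp_sub,
        Linear.comp_units_smul, ← Category.assoc (P.d p (p + 1)) (P.d (p + 1) (p + 1 + 1)),
        P.d_comp_d p (p + 1) (p + 1 + 1)]
      simp
    have h2 : ∃ v : P.X p ⟶ C.X (p + n - 1), v ≫ C.d (p + n - 1) (p + n) =
        z.v p (p + n) rfl - n.negOnePow • (P.d p (p + 1) ≫
          (fAux P C n b z (p + 1) ≫ eqToHom (congrArg C.X (by omega : p + 1 + n - 1 = p + n)))) := by
      have := hP p
      refine exists_lift C (p + n) (hC (p + n)) _ ?_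
      rw [Preadditive.sub_comp, Linear.units_smul_comp, key]
      have hsign : (n + 1).negOnePow = -n.negOnePow := by
        rw [Int.negOnePow_succ]
      rw [hsign] at hcoc
      have : z.v p (p + n) rfl ≫ C.d (p + n) (p + n + 1) =
          n.negOnePow • (P.d p (p + 1) ≫ z.v (p + 1) (p + n + 1) (by omega)) := by
        rw [add_eq_zero_iff_eq_neg] at hcoc
        rw [hcoc, Units.neg_smul, neg_neg]
      rw [this]
      simp
    rw [fAux, dif_neg h, dif_pos h2]
    exact h2.choose_spec
  termination_by (b + 1 - n - p).toNat
  decreasing_by omega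

theorem stmt_1 (P C : Cplx A) (hP : ∀ n : ℤ, Projective (P.X n))
    (hC : Acyclic C) (hCb : Bdd C) : HomAcyclic P C := by
  intro n z
  obtain ⟨a, b, hb⟩ := hCb
  have hz : δ n (n + 1) z.1 = 0 := Cocycle.δ_eq_zero z (n + 1)
  refine ⟨Cochain.mk (fun p q hpq =>
    fAux P C n b z.1 p ≫ eqToHom (congrArg C.X (by omega : p + n - 1 = q))), ?_⟩
  ext p q hpq
  obtain rfl : q = p + n := hpq.symm
  rw [δ_v (n - 1) n (by omega) _ p (p + n) (by omega) (p + n - 1) (p + 1) (by omega) rfl]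
  simp only [Cochain.mk_v]
  rw [eqToHom_refl, Category.comp_id,
    fAux_spec P C hC b (fun m hm => hb m (Or.inr hm)) hP n z.1 hz p]
  exact sub_add_cancel _ _
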